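/- For every real t ≠ 0, det(B − tI) = t^{2d} · det(B' − tI + X/t²), where B is the NB-matrix of G, B' is its block indexed by directed edges not incident to a node c of degree d, and X = DFE. -/

import Mathlib

open Matrix

/-- The non-backtracking matrix of a simple graph `G`: rows and columns are indexed by
darts (directed edges); entry `(k→l, i→j)` is `δ_{jk} (1 - δ_{il})`. -/
def nbMatrix {V : Type*} [DecidableEq V] (G : SimpleGraph V) :
    Matrix G.Dart G.Dart ℝ := fun r c =>
  (if c.toProd.2 = r.toProd.1 then (1 : ℝ) else 0) *
  (if c.toProd.1 = r.toProd.2 then 0 else 1)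

/-- Darts (directed edges) not incident to the node `c`. -/
abbrev NonIncDart {V : Type*} (G : SimpleGraph V) (c : V) :=
  {e : G.Dart // e.toProd.1 ≠ c ∧ e.toProd.2 ≠ c}

/-- Darts (directed edges) incident to the node `c`. -/
abbrev IncDart {V : Type*} (G : SimpleGraph V) (c : V) :=
  {e : G.Dart // e.toProd.1 = c ∨ e.toProd.2 = c}

/-- The block `B'` of the NB-matrix: rows and columns indexed by darts not incident to `c`. -/
def blockB' {V : Type*} [DecidableEq V] (G : SimpleGraph V) (c : V) :
    Matrix (NonIncDart G c) (NonIncDart G c) ℝ := fun r s => nbMatrix G r.val s.val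

/-- The block `D`: rows indexed by darts not incident to `c`, columns by darts incident to `c`. -/
def blockD {V : Type*} [DecidableEq V] (G : SimpleGraph V) (c : V) :
    Matrix (NonIncDart G c) (IncDart G c) ℝ := fun r s => nbMatrix G r.val s.val

/-- The block `E`: rows indexed by darts incident to `c`, columns by darts not incident to `c`. -/
def blockE {V : Type*} [DecidableEq V] (G : SimpleGraph V) (c : V) :
    Matrix (IncDart G c) (NonIncDart G c) ℝ := fun r s => nbMatrix G r.val s.val

/-- The block `F`: rows and columns indexed by darts incident to `c`. -/
def blockF {V : Type*} [DecidableEq V] (G : SimpleGraph V) (c : V) :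
    Matrix (IncDart G c) (IncDart G c) ℝ := fun r s => nbMatrix G r.val s.val

/-- The matrix `X = D F E`, indexed by darts not incident to `c`. -/
def blockX {V : Type*} [Fintype V] [DecidableEq V] (G : SimpleGraph V) [DecidableRel G.Adj]
    (c : V) : Matrix (NonIncDart G c) (NonIncDart G c) ℝ :=
  blockD G c * blockF G c * blockE G c

/- ### Auxiliary lemmas -/

open Polynomial in
/-- det (t•1 - N) = t^card for nilpotent N over ℝ. -/
lemma det_smul_one_sub_of_nilpotent {n : Type*} [Fintype n] [DecidableEq n]
    (N : Matrix n n ℝ) (h : IsNilpotent N) (t : ℝ) :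
    (t • (1 : Matrix n n ℝ) - N).det = t ^ Fintype.card n := by
  have hch : N.charpoly = X ^ Fintype.card n := by
    have h2 := Matrix.isNilpotent_charpoly_sub_pow_of_isNilpotent h
    exact sub_eq_zero.mp h2.eq_zero
  have hmap : (charmatrix N).map (eval t) = t • (1 : Matrix n n ℝ) - N := by
    ext i j
    by_cases hij : i = j <;>
      simp [charmatrix_apply, hij, Matrix.one_apply, Matrix.diagonal_apply]
  have := RingHom.map_det (evalRingHom t) (charmatrix N)
  simp only [RingHom.mapMatrix_apply, coe_evalRingHom] at this
  rw [← hmap, ← this]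
  show eval t N.charpoly = _
  rw [hch, eval_pow, eval_X]

def incDartEquiv {V : Type*} [DecidableEq V] (G : SimpleGraph V) (c : V) :
    IncDart G c ≃ {v // G.Adj c v} ⊕ {v // G.Adj c v} where
  toFun d :=
    if h : d.val.toProd.1 = c then
      Sum.inl ⟨d.val.toProd.2, by have := d.val.adj; rwa [h] at this⟩
    else
      Sum.inr ⟨d.val.toProd.1, by
        have := d.val.adj; rw [d.prop.resolve_left h] at this; exact this.symm⟩
  invFun x := match x with
    | Sum.inl v => ⟨⟨(c, v.1), v.2⟩, Or.inl rfl⟩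
    | Sum.inr v => ⟨⟨(v.1, c), v.2.symm⟩, Or.inr rfl⟩
  left_inv d := by
    by_cases h : d.val.toProd.1 = c
    · simp only [h, dif_pos]
      exact Subtype.ext (SimpleGraph.Dart.ext _ _ (Prod.ext h.symm rfl))
    · simp only [h, dif_neg, not_false_iff]
      exact Subtype.ext (SimpleGraph.Dart.ext _ _ (Prod.ext rfl (d.prop.resolve_left h).symm))
  right_inv x := by
    match x with
    | Sum.inl v => simp
    | Sum.inr v =>
      have : v.1 ≠ c := fun h => G.irrefl (h ▸ v.2)
      simp [this]

lemma card_incDart {V : Type*} [Fintype V] [DecidableEq V] (G : SimpleGraph V)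
    [DecidableRel G.Adj] (c : V) :
    Fintype.card (IncDart G c) = 2 * G.degree c := by
  rw [Fintype.card_congr (incDartEquiv G c), Fintype.card_sum]
  have : Fintype.card {v // G.Adj c v} = G.degree c := by
    rw [← SimpleGraph.card_neighborSet_eq_degree]
    exact Fintype.card_congr
      (Equiv.subtypeEquivRight (fun v => by simp [SimpleGraph.mem_neighborSet]))
  omega

lemma nbMatrix_ne_zero {V : Type*} [DecidableEq V] {G : SimpleGraph V} {r s : G.Dart}
    (h : nbMatrix G r s ≠ 0) :
    s.toProd.2 = r.toProd.1 ∧ s.toProd.1 ≠ r.toProd.2 := by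
  unfold nbMatrix at h
  by_cases h1 : s.toProd.2 = r.toProd.1 <;> by_cases h2 : s.toProd.1 = r.toProd.2 <;>
    simp [h1, h2] at h ⊢

lemma blockF_entry_ne_zero {V : Type*} [DecidableEq V] {G : SimpleGraph V} {c : V}
    {r s : IncDart G c} (h : blockF G c r s ≠ 0) :
    s.val.toProd.2 = c ∧ r.val.toProd.1 = c := by
  obtain ⟨h1, h2⟩ := nbMatrix_ne_zero h
  have hs2 : s.val.toProd.2 = c := by
    by_contra hs2
    have hs1 : s.val.toProd.1 = c := s.prop.resolve_right hs2
    have hr2 : r.val.toProd.2 = c := by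
      rcases r.prop with hr | hr
      · exact absurd (h1.trans hr) hs2
      · exact hr
    exact h2 (hs1.trans hr2.symm)
  exact ⟨hs2, h1 ▸ hs2⟩

lemma blockF_sq {V : Type*} [Fintype V] [DecidableEq V] (G : SimpleGraph V)
    [DecidableRel G.Adj] (c : V) : blockF G c * blockF G c = 0 := by
  ext r s
  simp only [Matrix.mul_apply, Matrix.zero_apply]
  apply Finset.sum_eq_zero
  intro m _
  by_contra hrm
  obtain ⟨ha, hb⟩ := mul_ne_zero_iff.mp hrm
  have h1 := (blockF_entry_ne_zero ha).1
  have h2 := (blockF_entry_ne_zero hb).2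
  exact G.irrefl (h1 ▸ h2 ▸ m.val.adj)

lemma blockD_mul_blockE {V : Type*} [Fintype V] [DecidableEq V] (G : SimpleGraph V)
    [DecidableRel G.Adj] (c : V) : blockD G c * blockE G c = 0 := by
  ext r s
  simp only [Matrix.mul_apply, Matrix.zero_apply]
  apply Finset.sum_eq_zero
  intro m _
  by_contra hrm
  obtain ⟨ha, hb⟩ := mul_ne_zero_iff.mp hrm
  obtain ⟨h1, h2⟩ := nbMatrix_ne_zero ha
  obtain ⟨h3, _⟩ := nbMatrix_ne_zero hb
  have hm1 : m.val.toProd.1 = c := by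
    rcases m.prop with hm | hm
    · exact hm
    · exact (r.prop.1 (h1.symm.trans hm)).elim
  exact s.prop.2 (h3.trans hm1)

/-- The equivalence putting non-incident darts first. -/
noncomputable def dartEquiv {V : Type*} [Fintype V] [DecidableEq V] (G : SimpleGraph V)
    [DecidableRel G.Adj] (c : V) : NonIncDart G c ⊕ IncDart G c ≃ G.Dart :=
  ((Equiv.subtypeEquivRight
      (fun _ : G.Dart => not_or.symm : ∀ d : G.Dart,
        (d.toProd.1 ≠ c ∧ d.toProd.2 ≠ c) ↔ ¬(d.toProd.1 = c ∨ d.toProd.2 = c))).sumCongr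
    (Equiv.refl (IncDart G c))).trans
    ((Equiv.sumComm _ _).trans (Equiv.sumCompl _))

theorem det_nbMatrix_sub_smul_one {V : Type*} [Fintype V] [DecidableEq V]
    (G : SimpleGraph V) [DecidableRel G.Adj] (c : V) (t : ℝ) (ht : t ≠ 0) :
    (nbMatrix G - t • 1).det =
      t ^ (2 * G.degree c) * (blockB' G c - t • 1 + (t ^ 2)⁻¹ • blockX G c).det := by
  classical
  set σ := dartEquiv G c with hσdef
  have hσ1 : ∀ r : NonIncDart G c, σ (Sum.inl r) = r.val := fun r => rfl
  have hσ2 : ∀ r : IncDart G c, σ (Sum.inr r) = r.val := fun r => rfl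
  set A := blockB' G c - t • (1 : Matrix (NonIncDart G c) (NonIncDart G c) ℝ) with hA
  set Ft := blockF G c - t • (1 : Matrix (IncDart G c) (IncDart G c) ℝ) with hFt
  -- block decomposition
  have hblocks : (nbMatrix G - t • 1).submatrix σ σ =
      fromBlocks A (blockD G c) (blockE G c) Ft := by
    ext i j
    cases i with
    | inl r =>
      cases j with
      | inl s =>
        have : r.val = s.val ↔ r = s := Subtype.val_inj
        simp [Matrix.submatrix_apply, hσ1, hA, blockB', Matrix.sub_apply, Matrix.smul_apply,
          Matrix.one_apply, this]
      | inr s =>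
        have hne : r.val ≠ s.val := by
          intro h
          rcases s.prop with hs | hs
          · exact r.prop.1 (h ▸ hs)
          · exact r.prop.2 (h ▸ hs)
        simp [Matrix.submatrix_apply, hσ1, hσ2, blockD, Matrix.sub_apply, Matrix.smul_apply,
          Matrix.one_apply, hne]
    | inr r =>
      cases j with
      | inl s =>
        have hne : r.val ≠ s.val := by
          intro h
          rcases r.prop with hr | hr
          · exact s.prop.1 (h ▸ hr)
          · exact s.prop.2 (h ▸ hr)
        simp [Matrix.submatrix_apply, hσ1, hσ2, blockE, Matrix.sub_apply, Matrix.smul_apply,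
          Matrix.one_apply, hne]
      | inr s =>
        have : r.val = s.val ↔ r = s := Subtype.val_inj
        simp [Matrix.submatrix_apply, hσ2, hFt, blockF, Matrix.sub_apply, Matrix.smul_apply,
          Matrix.one_apply, this]
  -- inverse of Ft
  set W := (-t⁻¹) • (1 : Matrix (IncDart G c) (IncDart G c) ℝ) - (t⁻¹ * t⁻¹) • blockF G c
    with hW
  have hFF := blockF_sq G c
  have hWr : Ft * W = 1 := by
    rw [hFt, hW]
    simp only [Matrix.sub_mul, Matrix.mul_sub, Matrix.smul_mul, Matrix.mul_smul,
      Matrix.one_mul, Matrix.mul_one, hFF, smul_zero, sub_zero, smul_smul]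
    match_scalars <;> field_simp <;> ring
  have hWl : W * Ft = 1 := by
    rw [hFt, hW]
    simp only [Matrix.sub_mul, Matrix.mul_sub, Matrix.smul_mul, Matrix.mul_smul,
      Matrix.one_mul, Matrix.mul_one, hFF, smul_zero, sub_zero, smul_smul]
    match_scalars <;> field_simp <;> ring
  haveI : Invertible Ft := ⟨W, hWl, hWr⟩
  have hinvFt : ⅟Ft = W := invOf_eq_right_inv hWr
  -- determinant of Ft
  have hdetFt : Ft.det = t ^ (2 * G.degree c) := by
    have hnil : IsNilpotent (blockF G c) := ⟨2, by rw [pow_two]; exact hFF⟩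
    have : Ft = -(t • 1 - blockF G c) := by rw [hFt]; abel
    rw [this, Matrix.det_neg, det_smul_one_sub_of_nilpotent _ hnil, card_incDart,
      Even.neg_one_pow (even_two_mul _), one_mul]
  -- Schur complement
  have hSchur : A - blockD G c * ⅟Ft * blockE G c =
      blockB' G c - t • 1 + (t ^ 2)⁻¹ • blockX G c := by
    rw [hinvFt, hW, Matrix.mul_sub, Matrix.mul_smul, Matrix.mul_smul, Matrix.mul_one,
      Matrix.sub_mul, Matrix.smul_mul, Matrix.smul_mul, blockD_mul_blockE, smul_zero,
      zero_sub, sub_neg_eq_add, hA]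
    have : (t ^ 2)⁻¹ = t⁻¹ * t⁻¹ := by rw [pow_two, mul_inv]
    rw [this, blockX, Matrix.mul_assoc]
  calc (nbMatrix G - t • 1).det
      = ((nbMatrix G - t • 1).submatrix σ σ).det := (Matrix.det_submatrix_equiv_self σ _).symm
    _ = (fromBlocks A (blockD G c) (blockE G c) Ft).det := by rw [hblocks]
    _ = Ft.det * (A - blockD G c * ⅟Ft * blockE G c).det := Matrix.det_fromBlocks₂₂ _ _ _ _
    _ = t ^ (2 * G.degree c) * (blockB' G c - t • 1 + (t ^ 2)⁻¹ • blockX G c).det := by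
        rw [hdetFt, hSchur]
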